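/- For x₀ ∈ ℝⁿ with ⟨xⱼ - x₀, x₀⟩ not all zero (j = 1,...,k+1), the k-plane Σ_{x₀} = H{x₀,x₁,...,x_{k+1}} ∩ H_{x₀} is contained in the hyperplane {x : ⟨x, ω⟩ = c} (ω a unit vector, c ∈ ℝ) if and only if: (i) ⟨x₀, ω⟩ = c, and (ii) there exists i with ⟨xᵢ - x₀, x₀⟩ ≠ 0 such that ⟨xᵢ - x₀, x₀⟩⟨xⱼ - x₀, ω⟩ = ⟨xⱼ - x₀, x₀⟩⟨xᵢ - x₀, ω⟩ for all j ≠ i. -/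
import Mathlib


open scoped RealInnerProductSpace

theorem aux_stmt6 {k : ℕ} (a b : Fin (k + 1) → ℝ) (c0 c : ℝ) (hU : ∃ i, a i ≠ 0) :
    (∀ lam : Fin (k + 1) → ℝ, (∑ j, lam j * a j) = 0 → c0 + ∑ j, lam j * b j = c)
    ↔ (c0 = c ∧ ∃ i, a i ≠ 0 ∧ ∀ j, j ≠ i → a i * b j = a j * b i) := by
  constructor
  · intro h
    have hc : c0 = c := by simpa using h 0 (by simp)
    refine ⟨hc, ?_⟩
    obtain ⟨i, hi⟩ := hU
    refine ⟨i, hi, fun j hj => ?_⟩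
    set lam : Fin (k + 1) → ℝ :=
      fun m => (if m = j then a i else 0) - (if m = i then a j else 0) with hlam
    have hsum : ∑ m, lam m * a m = 0 := by
      simp only [hlam, sub_mul, ite_mul, zero_mul, Finset.sum_sub_distrib,
        Finset.sum_ite_eq', Finset.mem_univ, if_true]
      ring
    have h2 := h lam hsum
    have hsb : ∑ m, lam m * b m = a i * b j - a j * b i := by
      simp only [hlam, sub_mul, ite_mul, zero_mul, Finset.sum_sub_distrib,
        Finset.sum_ite_eq', Finset.mem_univ, if_true]
    rw [hsb, hc] at h2
    linarith
  · rintro ⟨hc, i, hi, hij⟩ lam hsum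
    have hall : ∀ j, a i * b j = a j * b i := by
      intro j
      by_cases hj : j = i
      · subst hj; ring
      · exact hij j hj
    have h0 : a i * ∑ j, lam j * b j = 0 := by
      rw [Finset.mul_sum]
      have hcongr : ∀ j ∈ Finset.univ, a i * (lam j * b j) = lam j * a j * b i := by
        intro j _
        rw [mul_left_comm, hall j]; ring
      rw [Finset.sum_congr rfl hcongr, ← Finset.sum_mul, hsum, zero_mul]
    have hS : ∑ j, lam j * b j = 0 := by
      rcases mul_eq_zero.mp h0 with h | h
      · exact absurd h hi
      · exact h
    rw [hS, add_zero, hc]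

/-- The `k`-plane `Σ_{x₀} = {x₀ + ∑ⱼ λⱼ (xⱼ - x₀) : ∑ⱼ λⱼ ⟪xⱼ - x₀, x₀⟫ = 0}` is contained
in the hyperplane `{x : ⟪x, ω⟫ = c}` iff (i) `⟪x₀, ω⟫ = c` and (ii) there is an `i` with
`⟪xᵢ - x₀, x₀⟫ ≠ 0` and `⟪xᵢ - x₀, x₀⟫⟪xⱼ - x₀, ω⟫ = ⟪xⱼ - x₀, x₀⟫⟪xᵢ - x₀, ω⟫` for all
`j ≠ i`. -/
theorem stmt6 (n k : ℕ) (x : Fin (k + 1) → EuclideanSpace ℝ (Fin n))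
    (x₀ : EuclideanSpace ℝ (Fin n))
    (hU : ∃ i : Fin (k + 1), ⟪x i - x₀, x₀⟫ ≠ 0)
    (ω : EuclideanSpace ℝ (Fin n)) (hω : ‖ω‖ = 1) (c : ℝ) :
    (∀ lam : Fin (k + 1) → ℝ, (∑ j, lam j * ⟪x j - x₀, x₀⟫) = 0 →
        ⟪x₀ + ∑ j, lam j • (x j - x₀), ω⟫ = c)
    ↔ (⟪x₀, ω⟫ = c ∧
        ∃ i : Fin (k + 1), ⟪x i - x₀, x₀⟫ ≠ 0 ∧
          ∀ j : Fin (k + 1), j ≠ i →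
            ⟪x i - x₀, x₀⟫ * ⟪x j - x₀, ω⟫ = ⟪x j - x₀, x₀⟫ * ⟪x i - x₀, ω⟫) := by
  have key : ∀ lam : Fin (k + 1) → ℝ,
      ⟪x₀ + ∑ j, lam j • (x j - x₀), ω⟫ = ⟪x₀, ω⟫ + ∑ j, lam j * ⟪x j - x₀, ω⟫ := by
    intro lam
    rw [inner_add_left, sum_inner]
    simp only [real_inner_smul_left]
  simp only [key]
  exact aux_stmt6 (fun j => ⟪x j - x₀, x₀⟫) (fun j => ⟪x j - x₀, ω⟫) ⟪x₀, ω⟫ c hU
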